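/- For any real numbers α, β with α < 1, β < 1 and α + β > 1, there is a constant C such that for all positive integers n and all nonnegative integers m, the sum Σ_{x,y > m, x+y=n} x^{-α} y^{-β} is at most C · (n+m)^{1-α-β}. -/
import Mathlib

lemma rpow_succ_sub_ge (p : ℝ) (hp0 : 0 < p) (hp1 : p < 1) (a : ℝ) (ha : 0 ≤ a) :
    p * (a + 1) ^ (p - 1) ≤ (a + 1) ^ p - a ^ p := by
  obtain ⟨c, hc, hceq⟩ := exists_hasDerivAt_eq_slope (fun t => t ^ p)
      (fun t => p * t ^ (p - 1)) (by linarith : a < a + 1)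
      (fun x hx => (Real.continuousAt_rpow_const x p (Or.inr hp0.le)).continuousWithinAt)
      (fun x hx => Real.hasDerivAt_rpow_const (Or.inl (by rcases hx with ⟨h1, h2⟩; nlinarith)))
  have hc0 : 0 < c := lt_of_le_of_lt ha hc.1
  have : (a + 1) ^ (p - 1) ≤ c ^ (p - 1) :=
    Real.rpow_le_rpow_of_nonpos hc0 hc.2.le (by linarith)
  have h2 : p * (a + 1) ^ (p - 1) ≤ p * c ^ (p - 1) := by nlinarith
  simp only [add_sub_cancel_left, div_one] at hceq
  linarith [hceq ▸ h2]

lemma sum_rpow_neg_le_aux (γ : ℝ) (h0 : 0 < γ) (h1 : γ < 1) (N : ℕ) :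
    ∑ x ∈ Finset.Ico 1 (N + 1), (x : ℝ) ^ (-γ) ≤ (1 / (1 - γ)) * (N : ℝ) ^ (1 - γ) := by
  induction N with
  | zero => simp [Real.zero_rpow (by intro h; linarith : 1 - γ ≠ 0)]
  | succ N ih =>
    rw [Finset.sum_Ico_succ_top (by omega)]
    have key := rpow_succ_sub_ge (1 - γ) (by linarith) (by linarith) (N : ℝ) (by positivity)
    have hexp : (1 - γ) - 1 = -γ := by ring
    rw [hexp] at key
    have hcast : ((N + 1 : ℕ) : ℝ) = (N : ℝ) + 1 := by push_cast; ring
    rw [hcast]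
    have hγ : (0:ℝ) < 1 - γ := by linarith
    have h3 : ((N:ℝ) + 1) ^ (-γ) ≤ (1 / (1 - γ)) * (((N:ℝ) + 1) ^ (1 - γ) - (N:ℝ) ^ (1 - γ)) := by
      rw [div_mul_eq_mul_div, le_div_iff₀ hγ]; linarith
    rw [mul_sub] at h3
    linarith

lemma sum_rpow_neg_le (γ : ℝ) (h0 : 0 < γ) (h1 : γ < 1) (n : ℕ) :
    ∑ x ∈ Finset.Ico 1 n, (x : ℝ) ^ (-γ) ≤ (1 / (1 - γ)) * (n : ℝ) ^ (1 - γ) := by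
  rcases Nat.eq_zero_or_pos n with rfl | hn
  · simp [Real.zero_rpow (by intro h; linarith : 1 - γ ≠ 0)]
  obtain ⟨N, rfl⟩ : ∃ N, n = N + 1 := ⟨n - 1, by omega⟩
  refine (sum_rpow_neg_le_aux γ h0 h1 N).trans ?_
  have h1' : (N : ℝ) ^ (1 - γ) ≤ ((N + 1 : ℕ) : ℝ) ^ (1 - γ) :=
    Real.rpow_le_rpow (by positivity) (by push_cast; linarith) (by linarith)
  have hγ : (0:ℝ) < 1 - γ := by linarith
  nlinarith [one_div_pos.mpr hγ]

theorem stmt_2 (α β : ℝ) (hα : α < 1) (hβ : β < 1) (hαβ : 1 < α + β) :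
    ∃ C : ℝ, 0 < C ∧ ∀ n m : ℕ, 0 < n →
      ∑ x ∈ Finset.Ico (m + 1) (n - m), (x : ℝ) ^ (-α) * ((n - x : ℕ) : ℝ) ^ (-β)
        ≤ C * ((n + m : ℕ) : ℝ) ^ (1 - α - β) := by
  have hα0 : 0 < α := by linarith
  have hβ0 : 0 < β := by linarith
  have hα1 : (0:ℝ) < 1 - α := by linarith
  have hβ1 : (0:ℝ) < 1 - β := by linarith
  set K : ℝ := (2:ℝ) ^ β * (1 / (1 - α)) + (2:ℝ) ^ α * (1 / (1 - β)) with hKdef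
  have hKpos : 0 < K := by
    have h1 : (0:ℝ) < (2:ℝ) ^ β := Real.rpow_pos_of_pos (by norm_num) _
    have h2 : (0:ℝ) < (2:ℝ) ^ α := Real.rpow_pos_of_pos (by norm_num) _
    have h3 : (0:ℝ) < 1 / (1 - α) := by positivity
    have h4 : (0:ℝ) < 1 / (1 - β) := by positivity
    positivity
  have hCpos : 0 < ((3:ℝ)/2) ^ (α + β - 1) * K :=
    mul_pos (Real.rpow_pos_of_pos (by norm_num) _) hKpos
  refine ⟨((3:ℝ)/2) ^ (α + β - 1) * K, hCpos, ?_⟩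
  intro n m hn
  have hnm0 : (0:ℝ) < ((n + m : ℕ) : ℝ) := by
    have : 0 < n + m := by omega
    exact_mod_cast this
  by_cases hne : m + 1 < n - m
  swap
  · rw [Finset.Ico_eq_empty (by omega), Finset.sum_empty]
    exact le_of_lt (mul_pos hCpos (Real.rpow_pos_of_pos hnm0 _))
  -- nonempty case
  have hnm : 2 * m + 2 ≤ n := by omega
  have hn0 : (0:ℝ) < (n:ℝ) := by exact_mod_cast hn
  have hhalf : (0:ℝ) < (n:ℝ)/2 := by positivity
  set S := Finset.Ico (m + 1) (n - m) with hS
  have hsub : S ⊆ Finset.Ico 1 n := by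
    intro x hx
    rw [Finset.mem_Ico] at *
    omega
  -- first half
  have hA : ∑ x ∈ S.filter (fun x => 2*x ≤ n), (x:ℝ)^(-α) * ((n - x : ℕ):ℝ)^(-β)
      ≤ (1/(1-α)) * (n:ℝ)^(1-α) * ((n:ℝ)/2)^(-β) := by
    calc ∑ x ∈ S.filter (fun x => 2*x ≤ n), (x:ℝ)^(-α) * ((n - x : ℕ):ℝ)^(-β)
        ≤ ∑ x ∈ S.filter (fun x => 2*x ≤ n), (x:ℝ)^(-α) * ((n:ℝ)/2)^(-β) := by
          apply Finset.sum_le_sum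
          intro x hx
          obtain ⟨hxS, hx2⟩ := Finset.mem_filter.mp hx
          rw [hS, Finset.mem_Ico] at hxS
          have hxn : x ≤ n := by omega
          have hcast : ((n - x : ℕ):ℝ) = (n:ℝ) - (x:ℝ) := by
            push_cast [Nat.cast_sub hxn]; ring
          have hge : (n:ℝ)/2 ≤ ((n - x : ℕ):ℝ) := by
            rw [hcast]
            have : (2*x : ℝ) ≤ (n:ℝ) := by exact_mod_cast hx2
            push_cast at this ⊢
            linarith
          exact mul_le_mul_of_nonneg_left
            (Real.rpow_le_rpow_of_nonpos hhalf hge (by linarith))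
            (Real.rpow_nonneg (by positivity) _)
      _ = (∑ x ∈ S.filter (fun x => 2*x ≤ n), (x:ℝ)^(-α)) * ((n:ℝ)/2)^(-β) := by
          rw [Finset.sum_mul]
      _ ≤ (∑ x ∈ Finset.Ico 1 n, (x:ℝ)^(-α)) * ((n:ℝ)/2)^(-β) := by
          apply mul_le_mul_of_nonneg_right _ (Real.rpow_nonneg hhalf.le _)
          apply Finset.sum_le_sum_of_subset_of_nonneg
          · exact (Finset.filter_subset _ _).trans hsub
          · intro i _ _; exact Real.rpow_nonneg (by positivity) _
      _ ≤ (1/(1-α)) * (n:ℝ)^(1-α) * ((n:ℝ)/2)^(-β) :=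
          mul_le_mul_of_nonneg_right (sum_rpow_neg_le α hα0 hα n) (Real.rpow_nonneg hhalf.le _)
  -- second half
  have hrefl : ∑ x ∈ S, ((n - x : ℕ):ℝ)^(-β) = ∑ y ∈ S, (y:ℝ)^(-β) := by
    apply Finset.sum_nbij' (fun x => n - x) (fun y => n - y)
    · intro a ha; rw [hS, Finset.mem_Ico] at *; omega
    · intro a ha; rw [hS, Finset.mem_Ico] at *; omega
    · intro a ha; rw [hS, Finset.mem_Ico] at ha; omega
    · intro a ha; rw [hS, Finset.mem_Ico] at ha; omega
    · intro a ha; rfl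
  have hB : ∑ x ∈ S.filter (fun x => ¬ (2*x ≤ n)), (x:ℝ)^(-α) * ((n - x : ℕ):ℝ)^(-β)
      ≤ ((n:ℝ)/2)^(-α) * ((1/(1-β)) * (n:ℝ)^(1-β)) := by
    calc ∑ x ∈ S.filter (fun x => ¬ (2*x ≤ n)), (x:ℝ)^(-α) * ((n - x : ℕ):ℝ)^(-β)
        ≤ ∑ x ∈ S.filter (fun x => ¬ (2*x ≤ n)), ((n:ℝ)/2)^(-α) * ((n - x : ℕ):ℝ)^(-β) := by
          apply Finset.sum_le_sum
          intro x hx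
          obtain ⟨hxS, hx2⟩ := Finset.mem_filter.mp hx
          have hge : (n:ℝ)/2 ≤ (x:ℝ) := by
            have : (n:ℝ) < 2*(x:ℝ) := by exact_mod_cast Nat.lt_of_not_le hx2
            linarith
          exact mul_le_mul_of_nonneg_right
            (Real.rpow_le_rpow_of_nonpos hhalf hge (by linarith))
            (Real.rpow_nonneg (by positivity) _)
      _ = ((n:ℝ)/2)^(-α) * ∑ x ∈ S.filter (fun x => ¬ (2*x ≤ n)), ((n - x : ℕ):ℝ)^(-β) := by
          rw [Finset.mul_sum]
      _ ≤ ((n:ℝ)/2)^(-α) * ∑ x ∈ S, ((n - x : ℕ):ℝ)^(-β) := by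
          apply mul_le_mul_of_nonneg_left _ (Real.rpow_nonneg hhalf.le _)
          apply Finset.sum_le_sum_of_subset_of_nonneg (Finset.filter_subset _ _)
          intro i _ _; exact Real.rpow_nonneg (by positivity) _
      _ = ((n:ℝ)/2)^(-α) * ∑ y ∈ S, (y:ℝ)^(-β) := by rw [hrefl]
      _ ≤ ((n:ℝ)/2)^(-α) * ∑ y ∈ Finset.Ico 1 n, (y:ℝ)^(-β) := by
          apply mul_le_mul_of_nonneg_left _ (Real.rpow_nonneg hhalf.le _)
          apply Finset.sum_le_sum_of_subset_of_nonneg hsub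
          intro i _ _; exact Real.rpow_nonneg (by positivity) _
      _ ≤ ((n:ℝ)/2)^(-α) * ((1/(1-β)) * (n:ℝ)^(1-β)) :=
          mul_le_mul_of_nonneg_left (sum_rpow_neg_le β hβ0 hβ n) (Real.rpow_nonneg hhalf.le _)
  -- combine
  have etwo : ∀ γ : ℝ, ((n:ℝ)/2)^(-γ) = (2:ℝ)^γ * (n:ℝ)^(-γ) := by
    intro γ
    rw [div_eq_mul_inv, Real.mul_rpow hn0.le (by norm_num),
      Real.inv_rpow (by norm_num), ← Real.rpow_neg (by norm_num), neg_neg, mul_comm]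
  have r1 : (n:ℝ)^(1-α) * (n:ℝ)^(-β) = (n:ℝ)^(1-α-β) := by
    rw [← Real.rpow_add hn0]; ring_nf
  have r2 : (n:ℝ)^(-α) * (n:ℝ)^(1-β) = (n:ℝ)^(1-α-β) := by
    rw [← Real.rpow_add hn0]; ring_nf
  have comb : (1/(1-α)) * (n:ℝ)^(1-α) * ((n:ℝ)/2)^(-β)
      + ((n:ℝ)/2)^(-α) * ((1/(1-β)) * (n:ℝ)^(1-β)) = K * (n:ℝ)^(1-α-β) := by
    rw [etwo β, etwo α, hKdef]
    linear_combination ((2:ℝ)^β * (1/(1-α))) * r1 + ((2:ℝ)^α * (1/(1-β))) * r2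
  have hsplit : ∑ x ∈ S, (x:ℝ)^(-α) * ((n - x : ℕ):ℝ)^(-β) ≤ K * (n:ℝ)^(1-α-β) := by
    rw [← Finset.sum_filter_add_sum_filter_not S (fun x => 2*x ≤ n), ← comb]
    exact add_le_add hA hB
  -- compare n with n + m
  have hmn : ((n + m : ℕ):ℝ) ≤ (3/2) * (n:ℝ) := by
    have : (2*m + 2 : ℝ) ≤ (n:ℝ) := by exact_mod_cast hnm
    push_cast
    linarith
  have h32 : ((3:ℝ)/2) ^ (α + β - 1) * ((3:ℝ)/2) ^ (1 - α - β) = 1 := by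
    rw [← Real.rpow_add (by norm_num), show α+β-1+(1-α-β) = 0 by ring, Real.rpow_zero]
  have h2' : ((3/2) * (n:ℝ)) ^ (1-α-β) = ((3:ℝ)/2)^(1-α-β) * (n:ℝ)^(1-α-β) :=
    Real.mul_rpow (by norm_num) hn0.le
  have h1' : ((3/2) * (n:ℝ)) ^ (1-α-β) ≤ ((n + m : ℕ):ℝ) ^ (1-α-β) :=
    Real.rpow_le_rpow_of_nonpos hnm0 hmn (by linarith)
  have hstep2 : (n:ℝ)^(1-α-β) ≤ ((3:ℝ)/2)^(α+β-1) * ((n + m : ℕ):ℝ)^(1-α-β) := by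
    calc (n:ℝ)^(1-α-β) = (((3:ℝ)/2)^(α+β-1) * ((3:ℝ)/2)^(1-α-β)) * (n:ℝ)^(1-α-β) := by
          rw [h32, one_mul]
      _ = ((3:ℝ)/2)^(α+β-1) * (((3/2) * (n:ℝ)) ^ (1-α-β)) := by rw [h2']; ring
      _ ≤ ((3:ℝ)/2)^(α+β-1) * ((n + m : ℕ):ℝ)^(1-α-β) :=
          mul_le_mul_of_nonneg_left h1' (Real.rpow_nonneg (by norm_num) _)
  calc ∑ x ∈ S, (x:ℝ)^(-α) * ((n - x : ℕ):ℝ)^(-β) ≤ K * (n:ℝ)^(1-α-β) := hsplit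
    _ ≤ K * (((3:ℝ)/2)^(α+β-1) * ((n + m : ℕ):ℝ)^(1-α-β)) :=
        mul_le_mul_of_nonneg_left hstep2 hKpos.le
    _ = ((3:ℝ)/2)^(α+β-1) * K * ((n + m : ℕ):ℝ)^(1-α-β) := by ring
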